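/- Let G be a finite connected simple graph with an acyclic orientation o having a unique source, and let t be a sink of o. Then removing t (and all edges incident to t) leaves a connected graph. -/
import Mathlib


theorem stmt4 {V : Type*} [Fintype V] (G : SimpleGraph V)
    (hcard : 2 ≤ Fintype.card V) (hconn : G.Connected)
    (o : V → V → Prop)
    (hsub : ∀ u v, o u v → G.Adj u v)
    (htotal : ∀ u v, G.Adj u v → o u v ∨ o v u)
    (hanti : ∀ u v, o u v → ¬ o v u)
    (hacyc : ∀ v, ¬ Relation.TransGen o v v)
    (s : V) (hs : ∀ u, ¬ o u s)
    (hunique : ∀ v, (∀ u, ¬ o u v) → v = s)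
    (t : V) (ht : ∀ u, ¬ o t u) :
    (G.induce {v : V | v ≠ t}).Connected := by
  -- o is well-founded
  have hwf : WellFounded o := by
    have htg : WellFounded (Relation.TransGen o) := by
      have : IsTrans V (Relation.TransGen o) := ⟨fun a b c => Relation.TransGen.trans⟩
      have : IsIrrefl V (Relation.TransGen o) := ⟨hacyc⟩
      exact Finite.wellFounded_of_trans_of_irrefl _
    exact Subrelation.wf (fun h => Relation.TransGen.single h) htg
  -- every vertex reachable from s via o
  have hreach : ∀ v, Relation.ReflTransGen o s v := by
    intro v
    induction v using hwf.induction with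
    | _ v ih =>
      by_cases hv : v = s
      · subst hv; exact Relation.ReflTransGen.refl
      · have : ¬ ∀ u, ¬ o u v := fun h => hv (hunique v h)
        push_neg at this
        obtain ⟨u, hu⟩ := this
        exact (ih u hu).tail hu
  -- s ≠ t
  have hst : s ≠ t := by
    obtain ⟨u, hu⟩ := Fintype.exists_ne_of_one_lt_card (by omega) s
    obtain ⟨w⟩ := hconn.preconnected s u
    cases w with
    | nil => exact absurd rfl hu
    | cons h p =>
      rcases htotal _ _ h with h' | h'
      · intro hst; subst hst; exact ht _ h'
      · exact absurd h' (hs _)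
  -- reachability within induced graph from s to any v ≠ t
  have key : ∀ v, Relation.ReflTransGen o s v → ∀ hv : v ≠ t,
      (G.induce {v : V | v ≠ t}).Reachable ⟨s, hst⟩ ⟨v, hv⟩ := by
    intro v h
    induction h with
    | refl => intro _; rfl
    | @tail b c hb hbc ih =>
      intro hv
      have hb' : b ≠ t := fun h => ht _ (h ▸ hbc)
      have hadj : (G.induce {v : V | v ≠ t}).Adj ⟨b, hb'⟩ ⟨c, hv⟩ := by
        simp [hsub _ _ hbc]
      exact (ih hb').trans hadj.reachable
  have : Nonempty {v : V | v ≠ t} := ⟨⟨s, hst⟩⟩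
  exact ⟨fun x y => ((key x.1 (hreach x.1) x.2).symm.trans (key y.1 (hreach y.1) y.2))⟩
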